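/- Let M, L be positive integers, S_1, …, S_L ⊆ Fin M a hierarchical (laminar) family with integer capacities C_1, …, C_L ≥ 1, and p̃ : Fin M → ℝ. Then the greedy output x* satisfies ∑_{j ∈ S_l} x*_j ≤ C_l for every l ∈ {1,…,L}, and moreover x*_j = 0 whenever p̃_j ≤ 0. (Feasibility of the greedy solution.) -/

import Mathlib

attribute [local instance] Classical.propDecidable


/-- One step of the greedy algorithm: from the current candidate set `A`, keep all items
outside `S`, and inside `S` keep only the (at most) `C` smallest items of `A ∩ S` with
respect to the tie-broken order `r` (an item is kept iff fewer than `C` items of `A ∩ S`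
precede it under `r`). -/
noncomputable def greedyStep {M : ℕ} (r : Fin M → Fin M → Prop) (C : ℕ)
    (S A : Finset (Fin M)) : Finset (Fin M) :=
  (A \ S) ∪ (A ∩ S).filter (fun j => ((A ∩ S).filter (fun j' => r j' j)).card < C)

/-- The greedy iterates: `A_0 = {j : 0 < p j}` and `A_{l+1} = greedyStep r (C l) (S l) A_l`
for `l < L` (indices beyond `L` leave the set unchanged). -/
noncomputable def greedySets {M L : ℕ} (r : Fin M → Fin M → Prop)
    (S : Fin L → Finset (Fin M)) (C : Fin L → ℕ) (p : Fin M → ℝ) : ℕ → Finset (Fin M)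
  | 0 => Finset.univ.filter (fun j => 0 < p j)
  | n + 1 =>
    if h : n < L then
      greedyStep r (C ⟨n, h⟩) (S ⟨n, h⟩) (greedySets r S C p n)
    else greedySets r S C p n

/-- The greedy output `x*`: the 0/1 indicator (as a real-valued function) of the final
greedy set `A_L`. -/
noncomputable def greedyOutput {M L : ℕ} (r : Fin M → Fin M → Prop)
    (S : Fin L → Finset (Fin M)) (C : Fin L → ℕ) (p : Fin M → ℝ) : Fin M → ℝ :=
  fun j => if j ∈ greedySets r S C p L then 1 else 0


lemma greedyStep_subset {M : ℕ} (r : Fin M → Fin M → Prop) (C : ℕ)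
    (S A : Finset (Fin M)) : greedyStep r C S A ⊆ A := by
  unfold greedyStep
  intro j hj
  rcases Finset.mem_union.1 hj with h | h
  · exact (Finset.mem_sdiff.1 h).1
  · exact Finset.mem_inter.1 (Finset.mem_filter.1 h).1 |>.1

lemma greedyStep_inter_card {M : ℕ} (r : Fin M → Fin M → Prop)
    (hr : IsStrictTotalOrder (Fin M) r) (C : ℕ) (S A : Finset (Fin M)) :
    ((greedyStep r C S A) ∩ S).card ≤ C := by
  classical
  set B := A ∩ S with hB
  set T := B.filter (fun j => (B.filter (fun j' => r j' j)).card < C) with hT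
  have hTS : T ⊆ S := fun j hj =>
    (Finset.mem_inter.1 (Finset.mem_filter.1 hj).1).2
  have hinter : (greedyStep r C S A) ∩ S = T := by
    unfold greedyStep
    rw [Finset.union_inter_distrib_right]
    have h1 : (A \ S) ∩ S = ∅ := by
      ext j; simp [Finset.mem_sdiff, Finset.mem_inter]
    rw [h1, Finset.empty_union, Finset.inter_eq_left.2 hTS]
  rw [hinter]
  -- rank function is injective on B
  set f : Fin M → ℕ := fun j => (B.filter (fun j' => r j' j)).card with hf
  have hmono : ∀ j ∈ B, ∀ j' ∈ B, r j j' → f j < f j' := by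
    intro j hj j' hj' hrjj'
    apply Finset.card_lt_card
    constructor
    · intro k hk
      rw [Finset.mem_filter] at hk ⊢
      exact ⟨hk.1, hr.trans _ _ _ hk.2 hrjj'⟩
    · intro hsub
      have : j ∈ B.filter (fun k => r k j') := Finset.mem_filter.2 ⟨hj, hrjj'⟩
      have := Finset.mem_filter.1 (hsub this)
      exact hr.irrefl j this.2
  have hinj : Set.InjOn f T := by
    intro j hj j' hj' hfeq
    by_contra hne
    have hjB : j ∈ B := (Finset.mem_filter.1 hj).1
    have hj'B : j' ∈ B := (Finset.mem_filter.1 hj').1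
    rcases (by by_cases h1 : r j j'; exact Or.inl h1; by_cases h2 : r j' j; exact Or.inr (Or.inr h2); exact Or.inr (Or.inl (hr.trichotomous j j' h1 h2)) : r j j' ∨ j = j' ∨ r j' j) with h | h | h
    · exact absurd hfeq (Nat.ne_of_lt (hmono j hjB j' hj'B h))
    · exact hne h
    · exact absurd hfeq.symm (Nat.ne_of_lt (hmono j' hj'B j hjB h))
  have himg : T.image f ⊆ Finset.range C := by
    intro n hn
    rcases Finset.mem_image.1 hn with ⟨j, hj, rfl⟩
    exact Finset.mem_range.2 (Finset.mem_filter.1 hj).2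
  calc T.card = (T.image f).card :=
        (Finset.card_image_of_injOn hinj).symm
    _ ≤ C := by simpa using Finset.card_le_card himg

lemma greedySets_subset {M L : ℕ} (r : Fin M → Fin M → Prop)
    (S : Fin L → Finset (Fin M)) (C : Fin L → ℕ) (p : Fin M → ℝ) :
    ∀ m n : ℕ, m ≤ n → greedySets r S C p n ⊆ greedySets r S C p m := by
  intro m n hmn
  induction n with
  | zero => simpa [Nat.le_zero.1 hmn] using Finset.Subset.refl _
  | succ k ih =>
    rcases Nat.lt_or_ge m (k+1) with h | h
    · have hk := ih (Nat.lt_succ_iff.1 h)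
      refine Finset.Subset.trans ?_ hk
      show (if h : k < L then greedyStep r (C ⟨k, h⟩) (S ⟨k, h⟩) (greedySets r S C p k)
          else greedySets r S C p k) ⊆ greedySets r S C p k
      split
      · exact greedyStep_subset _ _ _ _
      · exact Finset.Subset.refl _
    · have : m = k + 1 := le_antisymm hmn h
      subst this; exact Finset.Subset.refl _

/-- **Feasibility of the greedy solution.** For a hierarchical (laminar) family of local
constraints, listed in a linear order extending strict inclusion, with capacities `C l ≥ 1`,
the greedy output `x*` satisfies every local constraint, and `x* j = 0` whenever `p̃ j ≤ 0`. -/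
theorem greedy_feasible
    {M L : ℕ} (hM : 0 < M) (hL : 0 < L)
    (S : Fin L → Finset (Fin M)) (C : Fin L → ℕ) (hC : ∀ l, 1 ≤ C l)
    (hlaminar : ∀ l l' : Fin L, (S l ∩ S l').Nonempty → S l ⊆ S l' ∨ S l' ⊆ S l)
    (horder : ∀ a b : Fin L, S a ⊂ S b → a < b)
    (p : Fin M → ℝ)
    (r : Fin M → Fin M → Prop) (hr : IsStrictTotalOrder (Fin M) r)
    (hrefine : ∀ j j' : Fin M, p j > p j' → r j j') :
    (∀ l : Fin L, ∑ j ∈ S l, greedyOutput r S C p j ≤ (C l : ℝ)) ∧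
    (∀ j : Fin M, p j ≤ 0 → greedyOutput r S C p j = 0) := by
  classical
  have key : ∀ l : Fin L, ((greedySets r S C p L) ∩ S l).card ≤ C l := by
    intro l
    have hlt : (l : ℕ) < L := l.isLt
    have hsub : greedySets r S C p L ⊆ greedySets r S C p ((l : ℕ) + 1) :=
      greedySets_subset r S C p _ _ (Nat.succ_le_of_lt hlt)
    have hstep : greedySets r S C p ((l : ℕ) + 1)
        = greedyStep r (C l) (S l) (greedySets r S C p (l : ℕ)) := by
      show (if h : (l : ℕ) < L then _ else _) = _
      rw [dif_pos hlt]
    have h1 : ((greedySets r S C p L) ∩ S l).card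
        ≤ ((greedySets r S C p ((l : ℕ) + 1)) ∩ S l).card :=
      Finset.card_le_card (Finset.inter_subset_inter_right hsub)
    refine h1.trans ?_
    rw [hstep]
    exact greedyStep_inter_card r hr (C l) (S l) _
  constructor
  · intro l
    have : ∑ j ∈ S l, greedyOutput r S C p j
        = (((S l).filter (fun j => j ∈ greedySets r S C p L)).card : ℝ) := by
      unfold greedyOutput
      rw [Finset.sum_boole]
    rw [this]
    have : (S l).filter (fun j => j ∈ greedySets r S C p L)
        = (greedySets r S C p L) ∩ S l := by
      ext j; simp [Finset.mem_filter, Finset.mem_inter, and_comm]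
    rw [this]
    exact_mod_cast key l
  · intro j hj
    unfold greedyOutput
    rw [if_neg]
    intro hmem
    have h0 : greedySets r S C p L ⊆ greedySets r S C p 0 :=
      greedySets_subset r S C p 0 L (Nat.zero_le _)
    have : j ∈ greedySets r S C p 0 := h0 hmem
    have : 0 < p j := by
      simpa [greedySets] using this
    linarith
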